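/- arXiv:0810.4558 — 4 statements merged into one kernel-verified Lean document; each statement's English description precedes it below -/
import Mathlib

section
/- Let L be a TD-operator acting on C[x], where C[x] is densely and injectively embedded in a Hilbert space H, and suppose L with domain C[x] is symmetric on H. Then there exists a sequence of monic polynomials {r_n} with deg(r_n) = n, pairwise orthogonal in H, such that L is tridiagonal with respect to {r_n}, i.e. L r_n ∈ span{r_{n-1}, r_n, r_{n+1}}. -/
open Polynomial Submodule

noncomputable def gs (ip : Polynomial ℂ → Polynomial ℂ → ℂ) : ℕ → Polynomial ℂ
  | n => X ^ n - ∑ m ∈ (Finset.range n).attach,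
      (ip (gs ip m.1) (X ^ n) / ip (gs ip m.1) (gs ip m.1)) • gs ip m.1
decreasing_by exact Finset.mem_range.mp m.2

lemma gs_def (ip : Polynomial ℂ → Polynomial ℂ → ℂ) (n : ℕ) :
    gs ip n = X ^ n - ∑ m ∈ Finset.range n,
      (ip (gs ip m) (X ^ n) / ip (gs ip m) (gs ip m)) • gs ip m := by
  rw [gs]
  congr 1
  exact Finset.sum_attach (Finset.range n)
    (fun m => (ip (gs ip m) (X ^ n) / ip (gs ip m) (gs ip m)) • gs ip m)

lemma ip_zero_of_mem_span {H : Type*} [NormedAddCommGroup H] [InnerProductSpace ℂ H]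
    (ι : Polynomial ℂ →ₗ[ℂ] H) (p : Polynomial ℂ) (s : Set (Polynomial ℂ))
    (h : ∀ q ∈ s, (inner ℂ (ι p) (ι q) : ℂ) = 0) {q : Polynomial ℂ}
    (hq : q ∈ Submodule.span ℂ s) :
    (inner ℂ (ι p) (ι q) : ℂ) = 0 := by
  have hle : Submodule.span ℂ s ≤
      LinearMap.ker (((innerSL ℂ (ι p)).toLinearMap).comp ι) := by
    rw [Submodule.span_le]
    intro x hx
    simp only [SetLike.mem_coe, LinearMap.mem_ker, LinearMap.comp_apply,
      ContinuousLinearMap.coe_coe, innerSL_apply_apply]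
    exact h x hx
  simpa using hle hq

/-- A symmetric TD-operator on `ℂ[x] ⊆ H` can be tridiagonalized by a family of
pairwise orthogonal monic polynomials. -/
theorem stmt_1
    {H : Type*} [NormedAddCommGroup H] [InnerProductSpace ℂ H]
    (ι : Polynomial ℂ →ₗ[ℂ] H) (hinj : Function.Injective ι)
    (hdense : Dense (Submodule.span ℂ (Set.range ι) : Set H))
    (S T : Polynomial ℂ →ₗ[ℂ] Polynomial ℂ) (d d' : ℕ → ℂ)
    (hS : ∀ k : ℕ, S (X ^ k) = d k • X ^ (k - 1))
    (hd0 : d 0 = 0) (hd : ∀ k : ℕ, 1 ≤ k → d k ≠ 0)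
    (hT : ∀ k : ℕ, T (X ^ k) = d' k • X ^ (k - 2))
    (hd'0 : d' 0 = 0) (hd'1 : d' 1 = 0) (hd' : ∀ k : ℕ, 2 ≤ k → d' k ≠ 0)
    (A B C : Polynomial ℂ)
    (hA : A.degree ≤ 3) (hB : B.degree ≤ 2) (hC : C.degree ≤ 1)
    (L : Polynomial ℂ →ₗ[ℂ] Polynomial ℂ)
    (hL : ∀ p : Polynomial ℂ, L p = A * T p + B * S p + C * p)
    (hsym : ∀ p q : Polynomial ℂ, inner ℂ (ι (L p)) (ι q) = (inner ℂ (ι p) (ι (L q)) : ℂ)) :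
    ∃ r : ℕ → Polynomial ℂ,
      (∀ n : ℕ, (r n).Monic ∧ (r n).degree = n) ∧
      (∀ m n : ℕ, m ≠ n → (inner ℂ (ι (r m)) (ι (r n)) : ℂ) = 0) ∧
      (∀ n : ℕ, 1 ≤ n →
        L (r n) ∈ Submodule.span ℂ ({r (n - 1), r n, r (n + 1)} : Set (Polynomial ℂ))) ∧
      L (r 0) ∈ Submodule.span ℂ ({r 0, r 1} : Set (Polynomial ℂ)) := by
  classical
  set ip : Polynomial ℂ → Polynomial ℂ → ℂ := fun p q => inner ℂ (ι p) (ι q) with hip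
  set r : ℕ → Polynomial ℂ := gs ip with hrdef
  have hr : ∀ k : ℕ, r k = X ^ k - ∑ m ∈ Finset.range k,
      (ip (r m) (X ^ k) / ip (r m) (r m)) • r m := by
    intro k; rw [hrdef]; exact gs_def ip k
  -- basic inner product facts
  have hconj : ∀ p q, ip p q = starRingEnd ℂ (ip q p) := by
    intro p q; rw [hip]; exact (inner_conj_symm (ι p) (ι q)).symm
  have hne : ∀ p : Polynomial ℂ, p ≠ 0 → ip p p ≠ 0 := by
    intro p hp h
    exact hp (hinj (by rw [map_zero]; exact inner_self_eq_zero.mp h))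
  have ipsub : ∀ p a b, ip p (a - b) = ip p a - ip p b := by
    intro p a b; simp only [hip, map_sub, inner_sub_right]
  have ipsmul : ∀ p (a : ℂ) b, ip p (a • b) = a * ip p b := by
    intro p a b; simp only [hip, map_smul, inner_smul_right]
  have ipsum : ∀ p (s : Finset ℕ) (f : ℕ → Polynomial ℂ),
      ip p (∑ m ∈ s, f m) = ∑ m ∈ s, ip p (f m) := by
    intro p s f; simp only [hip, map_sum, inner_sum]
  -- the main Gram–Schmidt induction
  have key : ∀ n : ℕ, (r n).Monic ∧ (r n).degree = n ∧
      ∀ m, m < n → ip (r m) (r n) = 0 := by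
    intro n
    induction n using Nat.strong_induction_on with
    | _ n IH =>
      have hs : (∑ m ∈ Finset.range n,
          (ip (r m) (X ^ n) / ip (r m) (r m)) • r m).degree < (n : WithBot ℕ) := by
        apply lt_of_le_of_lt (degree_sum_le _ _)
        refine (Finset.sup_lt_iff (WithBot.bot_lt_coe n)).mpr ?_
        intro m hm
        apply lt_of_le_of_lt (degree_smul_le _ _)
        rw [(IH m (Finset.mem_range.mp hm)).2.1]
        exact WithBot.coe_lt_coe.mpr (Finset.mem_range.mp hm)
      have hmon : (r n).Monic := by
        rw [hr n, sub_eq_add_neg]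
        exact (monic_X_pow n).add_of_left
          (by rw [degree_neg, degree_X_pow]; exact hs)
      have hdeg : (r n).degree = n := by
        rw [hr n, sub_eq_add_neg,
          degree_add_eq_left_of_degree_lt (by rw [degree_neg, degree_X_pow]; exact hs),
          degree_X_pow]
      refine ⟨hmon, hdeg, ?_⟩
      intro j hj
      rw [hr n, ipsub, ipsum]
      have hsum : ∑ m ∈ Finset.range n,
          ip (r j) ((ip (r m) (X ^ n) / ip (r m) (r m)) • r m) = ip (r j) (X ^ n) := by
        rw [Finset.sum_eq_single j]
        · rw [ipsmul]
          exact div_mul_cancel₀ _ (hne (r j) (IH j hj).1.ne_zero)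
        · intro m hm hmj
          rw [ipsmul]
          have hz : ip (r j) (r m) = 0 := by
            rcases lt_or_gt_of_ne (Ne.symm hmj) with h | h
            · exact (IH m (Finset.mem_range.mp hm)).2.2 j h
            · rw [hconj, (IH j hj).2.2 m h, map_zero]
          rw [hz, mul_zero]
        · intro h; exact absurd (Finset.mem_range.mpr hj) h
      rw [hsum, sub_self]
  have hmonic : ∀ n, (r n).Monic := fun n => (key n).1
  have hdeg : ∀ n : ℕ, (r n).degree = n := fun n => (key n).2.1
  have horth : ∀ m n : ℕ, m ≠ n → ip (r m) (r n) = 0 := by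
    intro m n h
    rcases lt_or_gt_of_ne h with h' | h'
    · exact (key n).2.2 m h'
    · rw [hconj, (key m).2.2 n h', map_zero]
  -- span of the r's
  have hspan : ∀ n : ℕ, degreeLE ℂ (n : WithBot ℕ) = span ℂ (r '' Set.Iic n) := by
    intro n
    apply le_antisymm
    · rw [degreeLE_eq_span_X_pow, Submodule.span_le]
      intro x hx
      simp only [Finset.coe_image, Set.mem_image, Finset.mem_coe, Finset.mem_range] at hx
      obtain ⟨k, hk, rfl⟩ := hx
      have hXk : (X : Polynomial ℂ) ^ k = r k + ∑ m ∈ Finset.range k,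
          (ip (r m) (X ^ k) / ip (r m) (r m)) • r m := by
        rw [hr k, sub_add_cancel]
      rw [SetLike.mem_coe, hXk]
      refine add_mem (subset_span ⟨k, Set.mem_Iic.mpr (by omega), rfl⟩) (sum_mem ?_)
      intro m hm
      exact smul_mem _ _ (subset_span ⟨m, by
        simp only [Finset.mem_range] at hm
        exact Set.mem_Iic.mpr (by omega), rfl⟩)
    · rw [Submodule.span_le]
      rintro x ⟨m, hm, rfl⟩
      rw [SetLike.mem_coe, mem_degreeLE, hdeg m]
      exact WithBot.coe_le_coe.mpr hm
  -- degree bounds for L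
  have hmul : ∀ (P : Polynomial ℂ) (b : ℕ), P.degree ≤ (b : WithBot ℕ) →
      ∀ (a : ℂ) (j : ℕ), (P * (a • X ^ j)).degree ≤ ((b + j : ℕ) : WithBot ℕ) := by
    intro P b hP a j
    calc (P * (a • X ^ j)).degree ≤ P.degree + (a • (X : Polynomial ℂ) ^ j).degree :=
          degree_mul_le _ _
      _ ≤ (b : WithBot ℕ) + (j : WithBot ℕ) := by
          refine add_le_add hP (le_trans (degree_smul_le _ _) ?_)
          rw [degree_X_pow]
      _ = ((b + j : ℕ) : WithBot ℕ) := by rw [Nat.cast_add]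
  have hLdeg : ∀ k : ℕ, (L ((X : Polynomial ℂ) ^ k)).degree ≤ ((k + 1 : ℕ) : WithBot ℕ) := by
    intro k
    have hA' : A.degree ≤ ((3 : ℕ) : WithBot ℕ) := by exact_mod_cast hA
    have hB' : B.degree ≤ ((2 : ℕ) : WithBot ℕ) := by exact_mod_cast hB
    have hC' : C.degree ≤ ((1 : ℕ) : WithBot ℕ) := by exact_mod_cast hC
    match k with
    | 0 =>
      have h1 : T ((X : Polynomial ℂ) ^ 0) = 0 := by rw [hT 0, hd'0, zero_smul]
      have h2 : S ((X : Polynomial ℂ) ^ 0) = 0 := by rw [hS 0, hd0, zero_smul]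
      rw [hL, h1, h2, mul_zero, mul_zero, zero_add, zero_add, pow_zero, mul_one]
      exact hC'
    | 1 =>
      have h1 : T ((X : Polynomial ℂ) ^ 1) = 0 := by rw [hT 1, hd'1, zero_smul]
      rw [hL, h1, mul_zero, zero_add, hS 1]
      refine le_trans (degree_add_le _ _) (max_le ?_ ?_)
      · exact le_trans (hmul B 2 hB' (d 1) (1 - 1)) (by norm_num)
      · calc (C * X ^ 1).degree ≤ C.degree + ((X : Polynomial ℂ) ^ 1).degree :=
            degree_mul_le _ _
          _ ≤ ((1 : ℕ) : WithBot ℕ) + ((1 : ℕ) : WithBot ℕ) := by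
              rw [degree_X_pow]; exact add_le_add hC' le_rfl
          _ ≤ ((1 + 1 : ℕ) : WithBot ℕ) := by rw [Nat.cast_add]
    | (k + 2) =>
      rw [hL, hT, hS]
      refine le_trans (degree_add_le _ _) (max_le (le_trans (degree_add_le _ _)
        (max_le ?_ ?_)) ?_)
      · refine le_trans (hmul A 3 hA' (d' (k + 2)) (k + 2 - 2)) ?_
        exact_mod_cast (show 3 + (k + 2 - 2) ≤ k + 2 + 1 by omega)
      · refine le_trans (hmul B 2 hB' (d (k + 2)) (k + 2 - 1)) ?_
        exact_mod_cast (show 2 + (k + 2 - 1) ≤ k + 2 + 1 by omega)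
      · calc (C * X ^ (k + 2)).degree ≤ C.degree + ((X : Polynomial ℂ) ^ (k + 2)).degree :=
            degree_mul_le _ _
          _ ≤ ((1 : ℕ) : WithBot ℕ) + ((k + 2 : ℕ) : WithBot ℕ) := by
              rw [degree_X_pow]; exact add_le_add hC' le_rfl
          _ ≤ ((k + 2 + 1 : ℕ) : WithBot ℕ) := by
              rw [← Nat.cast_add]
              exact_mod_cast (show 1 + (k + 2) ≤ k + 2 + 1 by omega)
  have hLdegLE : ∀ (n : ℕ) (p : Polynomial ℂ), p.degree ≤ (n : WithBot ℕ) →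
      (L p).degree ≤ ((n + 1 : ℕ) : WithBot ℕ) := by
    intro n p hp
    have h2 : degreeLE ℂ (n : WithBot ℕ) ≤
        (degreeLE ℂ ((n + 1 : ℕ) : WithBot ℕ)).comap L := by
      rw [degreeLE_eq_span_X_pow, Submodule.span_le]
      intro x hx
      simp only [Finset.coe_image, Set.mem_image, Finset.mem_coe, Finset.mem_range] at hx
      obtain ⟨k, hk, rfl⟩ := hx
      simp only [SetLike.mem_coe, Submodule.mem_comap, mem_degreeLE]
      exact le_trans (hLdeg k) (by exact_mod_cast (show k + 1 ≤ n + 1 by omega))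
    exact mem_degreeLE.mp (h2 (mem_degreeLE.mpr hp))
  have hLr : ∀ n : ℕ, L (r n) ∈ span ℂ (r '' Set.Iic (n + 1)) := by
    intro n
    rw [← hspan (n + 1)]
    exact mem_degreeLE.mpr (by exact_mod_cast hLdegLE n (r n) (le_of_eq (hdeg n)))
  -- orthogonality to lower-degree spans
  have hperp : ∀ (j n : ℕ), n < j → ∀ q ∈ span ℂ (r '' Set.Iic n), ip (r j) q = 0 := by
    intro j n hjn q hq
    refine ip_zero_of_mem_span ι (r j) _ ?_ hq
    rintro x ⟨m, hm, rfl⟩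
    exact horth j m (by simp only [Set.mem_Iic] at hm; omega)
  have hzero : ∀ n j : ℕ, j + 2 ≤ n → ip (r j) (L (r n)) = 0 := by
    intro n j h
    have h1 : ip (r j) (L (r n)) = ip (L (r j)) (r n) := (hsym (r j) (r n)).symm
    rw [h1, hconj, hperp n (j + 1) (by omega) (L (r j)) (hLr j), map_zero]
  -- expansion of L (r n) in the orthogonal family
  have hexp : ∀ n : ℕ, L (r n) = ∑ m ∈ Finset.range (n + 2),
      (ip (r m) (L (r n)) / ip (r m) (r m)) • r m := by
    intro n
    set q := L (r n) with hq
    set w : Polynomial ℂ := ∑ m ∈ Finset.range (n + 2),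
      (ip (r m) q / ip (r m) (r m)) • r m with hw
    have hiw : ∀ j, j ≤ n + 1 → ip (r j) w = ip (r j) q := by
      intro j hj
      rw [hw, ipsum]
      rw [Finset.sum_eq_single j]
      · rw [ipsmul]
        exact div_mul_cancel₀ _ (hne (r j) (hmonic j).ne_zero)
      · intro m hm hmj
        rw [ipsmul, horth j m (Ne.symm hmj), mul_zero]
      · intro hj'
        exact absurd (Finset.mem_range.mpr (by omega)) hj'
    have hmem : q - w ∈ span ℂ (r '' Set.Iic (n + 1)) := by
      refine sub_mem (hLr n) (sum_mem ?_)
      intro m hm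
      refine smul_mem _ _ (subset_span ⟨m, Set.mem_Iic.mpr ?_, rfl⟩)
      simp only [Finset.mem_range] at hm; omega
    have hzsub : ∀ x ∈ r '' Set.Iic (n + 1), ip (q - w) x = 0 := by
      rintro x ⟨m, hm, rfl⟩
      rw [hconj, ipsub, hiw m (Set.mem_Iic.mp hm), sub_self, map_zero]
    have h0 : ip (q - w) (q - w) = 0 :=
      ip_zero_of_mem_span ι (q - w) _ hzsub hmem
    have : q - w = 0 := by
      refine hinj ?_
      rw [map_zero]
      exact inner_self_eq_zero.mp h0
    rw [sub_eq_zero] at this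
    exact this
  -- assemble
  refine ⟨r, fun n => ⟨hmonic n, hdeg n⟩, fun m n h => horth m n h, ?_, ?_⟩
  · intro n hn
    rw [hexp n]
    refine sum_mem ?_
    intro m hm
    simp only [Finset.mem_range] at hm
    by_cases h2 : m + 2 ≤ n
    · rw [hzero n m h2, zero_div, zero_smul]
      exact zero_mem _
    · refine smul_mem _ _ (subset_span ?_)
      have : m = n - 1 ∨ m = n ∨ m = n + 1 := by omega
      rcases this with h | h | h <;> subst h <;> simp
  · rw [hexp 0]
    refine sum_mem ?_
    intro m hm
    simp only [Finset.mem_range] at hm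
    refine smul_mem _ _ (subset_span ?_)
    interval_cases m <;> simp
end

section
/- Fix b > 0, b ∉ 1/2 + ℕ, N = ⌊b + 1/2⌋, and let L = M_A d²/dz² + M_B d/dz + M_C with A(z) = −z², B(z) = (2N − 2b − 2 + z)z, C(z) = −(N − b − 1/2)² + z(1 − N). Then the Laguerre polynomials L_n^{(2b−2N)} tridiagonalize L: L L_n^{(2b−2N)} is a linear combination of L_{n+1}^{(2b−2N)}, L_n^{(2b−2N)}, L_{n−1}^{(2b−2N)} with coefficients −(1−N+n)(n+1), −(N−b−1/2)² + (1−N+n)(2n+2b−2N+1) − n, and −(n−N)(2b−2N+n) respectively (in the monic normalization of the tridiagonal relation adapted to standard Laguerre normalization). -/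
open Polynomial

/-- The Laguerre polynomials `L_n^{(2b-2N)}` (characterized by their differential
equation, three-term recurrence and differential-recursion relation) tridiagonalize
`L = M_A d²/dz² + M_B d/dz + M_C` with `A(z) = -z²`, `B(z) = (2N-2b-2+z)z`,
`C(z) = -(N-b-1/2)² + z(1-N)`. -/
theorem stmt_11
    (b : ℝ) (hb : 0 < b) (hbhalf : ¬∃ n : ℕ, b = 1 / 2 + n)
    (N : ℕ) (hN : N = Nat.floor (b + 1 / 2))
    (α : ℝ) (hα : α = 2 * b - 2 * N)
    (Lag : ℕ → Polynomial ℝ)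
    -- the Laguerre differential equation z y'' + (α+1-z) y' + n y = 0
    (hode : ∀ n : ℕ,
      X * derivative (derivative (Lag n)) + (Polynomial.C (α + 1) - X) * derivative (Lag n)
        + (n : ℝ) • Lag n = 0)
    -- the three-term recurrence
    (hrec : ∀ n : ℕ, 1 ≤ n →
      ((n : ℝ) + 1) • Lag (n + 1)
        = (Polynomial.C (2 * n + α + 1) - X) * Lag n - ((n : ℝ) + α) • Lag (n - 1))
    -- the differential-recursion relation
    (hder : ∀ n : ℕ, 1 ≤ n →
      X * derivative (Lag n) = (n : ℝ) • Lag n - ((n : ℝ) + α) • Lag (n - 1))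
    (Lop : Polynomial ℝ → Polynomial ℝ)
    (hLop : ∀ p : Polynomial ℝ,
      Lop p = (-X ^ 2) * derivative (derivative p)
        + ((Polynomial.C (2 * N - 2 * b - 2) + X) * X) * derivative p
        + (Polynomial.C (-((N : ℝ) - b - 1 / 2) ^ 2) + (1 - (N : ℝ)) • X) * p) :
    ∀ n : ℕ, 1 ≤ n →
      Lop (Lag n)
        = (-(1 - (N : ℝ) + n) * (n + 1)) • Lag (n + 1)
          + (-((N : ℝ) - b - 1 / 2) ^ 2 + (1 - (N : ℝ) + n) * (2 * n + 2 * b - 2 * N + 1) - n)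
            • Lag n
          + (-((n : ℝ) - N) * (2 * b - 2 * N + n)) • Lag (n - 1) := by
  subst hα
  intro n hn
  have e1 := hode n
  have e2 := hrec n hn
  have e3 := hder n hn
  rw [hLop]
  simp only [smul_eq_C_mul, map_add, map_sub, map_mul, map_one, map_ofNat, map_pow,
    map_neg, map_div₀] at e1 e2 e3 ⊢
  linear_combination (-X) * e1 - e3 + (C ((n : ℝ)) + 1 - C ((N : ℝ))) * e2
end

section
/- Let α ∈ ℂ, α ≠ ±1, c ∈ ℂ, m ∈ ℝ, and let L be the operator L f(y) = (y−1)(y+1)(y−α) f''(y) + (1/2)[(y+1)(y−α) + (y−1)(y−α) + (y−1)(y+1)] f'(y) − (1/4) m(m+1)(y + c) f(y). Then the Chebyshev polynomials of the first kind T_n tridiagonalize L: for n ≥ 1, L T_n = (1/8)(2n−m)(2n+m+1) T_{n+1} + (−α n² − (1/4) m(m+1) c) T_n + (1/8)(2n+m)(2n−m−1) T_{n−1}, and L T_0 = −(1/4) m(m+1) T_1 − (1/4) m(m+1) c T_0. -/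
open Polynomial

/-- The Chebyshev polynomials of the first kind tridiagonalize the (algebraic form of
the) Lamé operator
`L f = (y-1)(y+1)(y-α) f'' + ½[(y+1)(y-α)+(y-1)(y-α)+(y-1)(y+1)] f' − ¼ m(m+1)(y+c) f`. -/
theorem stmt_15
    (α : ℂ) (hα : α ≠ 1 ∧ α ≠ -1) (c : ℂ) (m : ℝ)
    (Lop : Polynomial ℂ → Polynomial ℂ)
    (hLop : ∀ p : Polynomial ℂ,
      Lop p = (X - 1) * (X + 1) * (X - Polynomial.C α) * derivative (derivative p)
        + Polynomial.C (1 / 2 : ℂ)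
          * ((X + 1) * (X - Polynomial.C α) + (X - 1) * (X - Polynomial.C α)
              + (X - 1) * (X + 1)) * derivative p
        - Polynomial.C ((1 / 4 : ℂ) * (m * (m + 1))) * (X + Polynomial.C c) * p) :
    (∀ n : ℕ, 1 ≤ n →
      Lop (Chebyshev.T ℂ n)
        = ((1 / 8 : ℂ) * (2 * n - m) * (2 * n + m + 1)) • Chebyshev.T ℂ (n + 1)
          + (-α * n ^ 2 - (1 / 4 : ℂ) * (m * (m + 1)) * c) • Chebyshev.T ℂ n
          + ((1 / 8 : ℂ) * (2 * n + m) * (2 * n - m - 1)) • Chebyshev.T ℂ (n - 1)) ∧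
    Lop (Chebyshev.T ℂ 0)
      = (-(1 / 4 : ℂ) * (m * (m + 1))) • Chebyshev.T ℂ 1
        + (-(1 / 4 : ℂ) * (m * (m + 1)) * c) • Chebyshev.T ℂ 0 := by
  constructor
  · intro n hn
    have hD := Chebyshev.T_derivative_eq_U (R := ℂ) (n : ℤ)
    have hU := Chebyshev.add_one_mul_T_eq_poly_in_U (R := ℂ) ((n:ℤ)-1)
    have h1 := Chebyshev.one_sub_X_sq_mul_derivative_T_eq_poly_in_T (R := ℂ) ((n:ℤ)-1)
    have h2 := Chebyshev.T_add_one ℂ (n:ℤ)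
    rw [sub_add_cancel] at hU h1
    have hD' : derivative (derivative (Chebyshev.T ℂ (n:ℤ)))
        = ((n:ℤ):ℂ[X]) * derivative (Chebyshev.U ℂ ((n:ℤ)-1)) := by
      rw [hD, derivative_mul]; simp
    rw [hLop]
    apply Polynomial.funext
    intro x
    have eD := congrArg (eval x) hD
    have eD' := congrArg (eval x) hD'
    have eU := congrArg (eval x) hU
    have e1 := congrArg (eval x) h1
    have e2 := congrArg (eval x) h2
    simp only [eval_add, eval_sub, eval_mul, eval_smul, smul_eq_mul, eval_X, eval_one,
      eval_C, eval_pow, eval_intCast, eval_natCast, eval_ofNat, Int.cast_sub,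
      Int.cast_natCast, Int.cast_one] at eD eD' eU e1 e2 ⊢
    push_cast
    linear_combination ((x-1)*(x+1)*(x-α)) * eD' - (n:ℂ)*(x-α) * eU
      + ((1/2:ℂ)*((x+1)*(x-α)+(x-1)*(x-α)+(x-1)*(x+1)) - (1/2)*(x^2-1)) * eD
      - (1/2) * e1
      - (((n:ℂ)^2 + (n:ℂ)/2 - (1/4)*(m*(m+1)))/2) * e2
  · rw [hLop, Chebyshev.T_zero, Chebyshev.T_one]
    simp only [derivative_one, derivative_zero, mul_zero, zero_add, mul_one, smul_eq_C_mul]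
    simp only [map_mul, map_neg, map_add, map_one]
    ring
end

section
/- Let m = 2k with k ∈ ℕ, and let L be the Lamé-type operator acting tridiagonally on Chebyshev polynomials via L T_n = (1/8)(2n−2k)(2n+2k+1) T_{n+1} + (−α n² − (1/4)·2k(2k+1)c) T_n + (1/8)(2n+2k)(2n−2k−1) T_{n−1} for n ≥ 1 and L T_0 = −(1/4)2k(2k+1) T_1 − (1/4)2k(2k+1)c T_0. Then the (k+1)-dimensional space spanned by T_0, …, T_k is invariant under L. -/
open Polynomial Submodule

/-- For `m = 2k` even, the Lamé-type operator acting tridiagonally on the Chebyshev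
polynomials leaves the `(k+1)`-dimensional space spanned by `T_0, …, T_k` invariant. -/
theorem stmt_17
    (k : ℕ) (α c : ℂ)
    (L : Polynomial ℂ →ₗ[ℂ] Polynomial ℂ)
    (hrec : ∀ n : ℕ, 1 ≤ n →
      L (Chebyshev.T ℂ n)
        = ((1 / 8 : ℂ) * (2 * n - 2 * k) * (2 * n + 2 * k + 1)) • Chebyshev.T ℂ (n + 1)
          + (-α * n ^ 2 - (1 / 4 : ℂ) * (2 * k * (2 * k + 1)) * c) • Chebyshev.T ℂ n
          + ((1 / 8 : ℂ) * (2 * n + 2 * k) * (2 * n - 2 * k - 1)) • Chebyshev.T ℂ (n - 1))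
    (hrec0 : L (Chebyshev.T ℂ 0)
      = (-(1 / 4 : ℂ) * (2 * k * (2 * k + 1))) • Chebyshev.T ℂ 1
        + (-(1 / 4 : ℂ) * (2 * k * (2 * k + 1)) * c) • Chebyshev.T ℂ 0) :
    ∀ p ∈ Submodule.span ℂ (Set.range fun i : Fin (k + 1) => Chebyshev.T ℂ (i : ℕ)),
      L p ∈ Submodule.span ℂ (Set.range fun i : Fin (k + 1) => Chebyshev.T ℂ (i : ℕ)) := by
  set S := Submodule.span ℂ (Set.range fun i : Fin (k + 1) => Chebyshev.T ℂ (i : ℕ)) with hS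
  have hmem : ∀ j : ℕ, j ≤ k → Chebyshev.T ℂ j ∈ S := by
    intro j hj
    apply Submodule.subset_span
    exact ⟨⟨j, Nat.lt_succ_of_le hj⟩, rfl⟩
  intro p hp
  refine Submodule.span_induction ?_ ?_ ?_ ?_ hp
  · rintro x ⟨⟨i, hi⟩, rfl⟩
    rcases Nat.eq_zero_or_pos i with h0 | h1
    · subst h0
      simp only [Nat.cast_zero] at hrec0 ⊢
      rw [hrec0]
      rcases Nat.eq_zero_or_pos k with hk | hk
      · subst hk
        push_cast
        ring_nf
        simpa using Submodule.zero_mem S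
      · exact Submodule.add_mem S (Submodule.smul_mem S _ (hmem 1 hk))
          (Submodule.smul_mem S _ (hmem 0 (Nat.zero_le _)))
    · have hik : i ≤ k := Nat.lt_succ_iff.mp hi
      rw [hrec i h1]
      refine Submodule.add_mem S (Submodule.add_mem S ?_ ?_) ?_
      · rcases eq_or_lt_of_le hik with heq | hlt
        · subst heq
          have : ((1 / 8 : ℂ) * (2 * i - 2 * i) * (2 * i + 2 * i + 1)) = 0 := by ring
          rw [this, zero_smul]
          exact Submodule.zero_mem S
        · have : ((i : ℤ) + 1) = ((i + 1 : ℕ) : ℤ) := by push_cast; ring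
          rw [show ((i:ℤ)+1) = ((i+1:ℕ):ℤ) from this] <;>
          exact Submodule.smul_mem S _ (hmem (i+1) hlt)
      · exact Submodule.smul_mem S _ (hmem i hik)
      · have : ((i : ℤ) - 1) = ((i - 1 : ℕ) : ℤ) := by
          omega
        rw [this]
        exact Submodule.smul_mem S _ (hmem (i-1) (le_trans (Nat.sub_le _ _) hik))
  · rw [map_zero]; exact Submodule.zero_mem S
  · intro x y _ _ hx hy
    rw [map_add]; exact Submodule.add_mem S hx hy
  · intro a x _ hx
    rw [map_smul]; exact Submodule.smul_mem S a hx
end
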